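/- Suppose r̄ ≥ (3/2) r_D, τ₃ κ² r_D < 4/9, τ₄ κ² r_D² < 1/3, and E[‖D F^{-1} ξ‖⁴ 1_S] ≤ C₄² 𝔞_D² for some C₄ > 0. Define R_Q = E[‖Q F^{-1} ξ‖² 1_S] and R_{Q,2} = E[‖Q φ‖² 1_S]. If a constant α_{Q,1} < 1 satisfies ‖Q F^{-1} D‖ · (τ₃/2) · C₄ · 𝔞_D ≤ α_{Q,1} √R_Q, then R_Q (1 − α_{Q,1})² ≤ R_{Q,2} ≤ R_Q (1 + α_{Q,1})². -/

import Mathlib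

open MeasureTheory RealInnerProductSpace

/-- Application of a matrix to a vector in Euclidean space. -/
noncomputable def mApp {p q : ℕ} (M : Matrix (Fin q) (Fin p) ℝ)
    (v : EuclideanSpace ℝ (Fin p)) : EuclideanSpace ℝ (Fin q) :=
  Matrix.toEuclideanLin M v

/-- Operator norm of (the Euclidean linear map induced by) a matrix. -/
noncomputable def mopNorm {p q : ℕ} (M : Matrix (Fin q) (Fin p) ℝ) : ℝ :=
  ‖(LinearMap.toContinuousLinearMap (Matrix.toEuclideanLin M))‖

lemma mApp_mul {p q r : ℕ} (M : Matrix (Fin r) (Fin q) ℝ) (N : Matrix (Fin q) (Fin p) ℝ)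
    (v : EuclideanSpace ℝ (Fin p)) : mApp (M * N) v = mApp M (mApp N v) := by
  simp [mApp, Matrix.toEuclideanLin_apply, Matrix.mulVec_mulVec]

lemma mApp_one {p : ℕ} (v : EuclideanSpace ℝ (Fin p)) : mApp 1 v = v := by
  simp [mApp, Matrix.toEuclideanLin_apply]

lemma mApp_add {p q : ℕ} (M : Matrix (Fin q) (Fin p) ℝ) (u v : EuclideanSpace ℝ (Fin p)) :
    mApp M (u + v) = mApp M u + mApp M v := by
  simp [mApp, map_add]

lemma mApp_zero {p q : ℕ} (M : Matrix (Fin q) (Fin p) ℝ) : mApp M 0 = 0 := by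
  simp [mApp]

lemma mApp_norm_le {p q : ℕ} (M : Matrix (Fin q) (Fin p) ℝ) (v : EuclideanSpace ℝ (Fin p)) :
    ‖mApp M v‖ ≤ mopNorm M * ‖v‖ := by
  simpa [mApp, mopNorm] using
    (LinearMap.toContinuousLinearMap (Matrix.toEuclideanLin M)).le_opNorm v

lemma mApp_continuous {p q : ℕ} (M : Matrix (Fin q) (Fin p) ℝ) : Continuous (mApp M) := by
  exact
    (LinearMap.toContinuousLinearMap (Matrix.toEuclideanLin M)).continuous

lemma mopNorm_nonneg {p q : ℕ} (M : Matrix (Fin q) (Fin p) ℝ) : 0 ≤ mopNorm M :=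
  norm_nonneg _

/-- Cauchy–Schwarz for integrals of nonnegative real functions. -/
lemma integral_mul_le_sqrt_mul_sqrt {Ω : Type} [MeasurableSpace Ω] (μ : Measure Ω)
    (f g : Ω → ℝ) (hf0 : ∀ ω, 0 ≤ f ω) (hg0 : ∀ ω, 0 ≤ g ω)
    (hfg : Integrable (fun ω => f ω * g ω) μ)
    (hf2 : Integrable (fun ω => f ω ^ 2) μ) (hg2 : Integrable (fun ω => g ω ^ 2) μ) :
    ∫ ω, f ω * g ω ∂μ ≤ Real.sqrt (∫ ω, f ω ^ 2 ∂μ) * Real.sqrt (∫ ω, g ω ^ 2 ∂μ) := by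
  set If := ∫ ω, f ω ^ 2 ∂μ with hIf
  set Ig := ∫ ω, g ω ^ 2 ∂μ with hIg
  have hIf0 : 0 ≤ If := integral_nonneg fun ω => sq_nonneg _
  have hIg0 : 0 ≤ Ig := integral_nonneg fun ω => sq_nonneg _
  set a := Real.sqrt If with ha
  set b := Real.sqrt Ig with hb
  have ha0 : 0 ≤ a := Real.sqrt_nonneg _
  have hb0 : 0 ≤ b := Real.sqrt_nonneg _
  have ha2 : a ^ 2 = If := Real.sq_sqrt hIf0
  have hb2 : b ^ 2 = Ig := Real.sq_sqrt hIg0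
  have key : ∀ η : ℝ, 0 < η → ∫ ω, f ω * g ω ∂μ ≤ a * b + η * (a + b) / 2 := by
    intro η hη
    set c := (b + η) / (a + η) with hc
    have hc0 : 0 < c := div_pos (by linarith) (by linarith)
    have hpt : ∀ ω, f ω * g ω ≤ (c * f ω ^ 2 + g ω ^ 2 / c) / 2 := by
      intro ω
      rw [le_div_iff₀ (by norm_num : (0:ℝ) < 2), ← sub_nonneg]
      have hrw : c * f ω ^ 2 + g ω ^ 2 / c - f ω * g ω * 2 = (c * f ω - g ω) ^ 2 / c := by
        field_simp
        ring
      rw [hrw]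
      positivity
    have hint : ∫ ω, f ω * g ω ∂μ ≤ ∫ ω, (c * f ω ^ 2 + g ω ^ 2 / c) / 2 ∂μ := by
      refine integral_mono hfg ?_ hpt
      exact (((hf2.const_mul c).add (hg2.div_const c)).div_const 2)
    have hval : ∫ ω, (c * f ω ^ 2 + g ω ^ 2 / c) / 2 ∂μ = (c * If + Ig / c) / 2 := by
      rw [integral_div]
      congr 1
      rw [integral_add (hf2.const_mul c) (hg2.div_const c), integral_const_mul, integral_div]
    have h1 : c * If ≤ a * (b + η) := by
      rw [hc, div_mul_eq_mul_div, div_le_iff₀ (by linarith : (0:ℝ) < a + η)]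
      nlinarith [ha2, mul_nonneg (mul_nonneg ha0 (show (0:ℝ) ≤ b + η by linarith)) hη.le]
    have h2 : Ig / c ≤ b * (a + η) := by
      rw [hc, div_div_eq_mul_div, div_le_iff₀ (by linarith : (0:ℝ) < b + η)]
      nlinarith [hb2, mul_nonneg (mul_nonneg hb0 (show (0:ℝ) ≤ a + η by linarith)) hη.le]
    calc ∫ ω, f ω * g ω ∂μ ≤ (c * If + Ig / c) / 2 := hval ▸ hint
      _ ≤ (a * (b + η) + b * (a + η)) / 2 := by linarith
      _ = a * b + η * (a + b) / 2 := by ring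
  by_contra hcon
  push_neg at hcon
  set δ := ∫ ω, f ω * g ω ∂μ - a * b with hδ
  have hδ0 : 0 < δ := by linarith
  have := key (δ / (a + b + 1)) (div_pos hδ0 (by linarith))
  have hab1 : 0 < a + b + 1 := by linarith
  have : δ / (a + b + 1) * (a + b) / 2 < δ := by
    rw [div_mul_eq_mul_div, div_div, div_lt_iff₀ (by positivity)]
    nlinarith
  linarith [key (δ / (a + b + 1)) (div_pos hδ0 (by linarith))]

lemma aux_sq_le_sq (d n : ℝ) (h1 : d ≤ n) (h2 : -d ≤ n) : d ^ 2 ≤ n ^ 2 := by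
  nlinarith [mul_nonneg (by linarith : (0:ℝ) ≤ n - d) (by linarith : (0:ℝ) ≤ n + d)]

lemma sq_expand_sub (x y : ℝ) : (x - y) ^ 2 = x ^ 2 - 2 * (x * y) + y ^ 2 := by ring

lemma sq_expand_add (x y : ℝ) : (x + y) ^ 2 = x ^ 2 + 2 * (x * y) + y ^ 2 := by ring

set_option maxHeartbeats 1000000 in
theorem risk_equivalence
    {p : ℕ} (hp : 1 ≤ p)
    (f : EuclideanSpace ℝ (Fin p) → ℝ)
    (hconv : ConvexOn ℝ Set.univ f)
    (hf : ContDiff ℝ 4 f)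
    (υs : EuclideanSpace ℝ (Fin p))
    (hgrad : gradient f υs = 0)
    (F : Matrix (Fin p) (Fin p) ℝ) (hF : F.PosDef)
    (hFdef : ∀ u w : EuclideanSpace ℝ (Fin p),
      iteratedFDeriv ℝ 2 f υs ![u, w] = ⟪mApp F u, w⟫)
    (D : Matrix (Fin p) (Fin p) ℝ) (hD : D.PosDef)
    (κ : ℝ) (hκ : 0 < κ)
    (hLoew : (κ ^ 2 • F - D * D).PosSemidef)
    (τ3 τ4 rb : ℝ) (hτ3 : 0 < τ3) (hτ4 : 0 < τ4) (hrb : 0 < rb)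
    (hT3 : ∀ υ : EuclideanSpace ℝ (Fin p), ‖mApp D (υ - υs)‖ ≤ rb →
      ∀ u w : EuclideanSpace ℝ (Fin p),
        |iteratedFDeriv ℝ 3 f υ ![u, u, w]| ≤ τ3 * ‖mApp D u‖ ^ 2 * ‖mApp D w‖)
    (hT4 : ∀ υ : EuclideanSpace ℝ (Fin p), ‖mApp D (υ - υs)‖ ≤ rb →
      ∀ u w : EuclideanSpace ℝ (Fin p),
        |iteratedFDeriv ℝ 4 f υ ![u, u, u, w]| ≤ τ4 * ‖mApp D u‖ ^ 3 * ‖mApp D w‖)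
    (gT : EuclideanSpace ℝ (Fin p) → EuclideanSpace ℝ (Fin p))
    (hgT : ∀ u w : EuclideanSpace ℝ (Fin p),
      ⟪gT u, w⟫ = 1 / 2 * iteratedFDeriv ℝ 3 f υs ![u, u, w])
    (rD : ℝ) (hrD : 0 < rD)
    {Ω : Type} [MeasurableSpace Ω] (P : Measure Ω) [IsProbabilityMeasure P]
    (ξ : Ω → EuclideanSpace ℝ (Fin p)) (hξm : Measurable ξ) (hξ2 : MemLp ξ 2 P)
    (S : Set Ω) (hS : MeasurableSet S)
    (hξD : ∀ ω ∈ S, ‖mApp D (mApp F⁻¹ (ξ ω))‖ ≤ rD)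
    {q : ℕ} (Q : Matrix (Fin q) (Fin p) ℝ)
    (aD : ℝ) (haD : aD = ∫ ω, ‖mApp D (mApp F⁻¹ (ξ ω))‖ ^ 2 ∂P)
    (h1 : rb ≥ 3 / 2 * rD) (h2 : τ3 * κ ^ 2 * rD < 4 / 9)
    (h3 : τ4 * κ ^ 2 * rD ^ 2 < 1 / 3)
    (C4 : ℝ) (hC4 : 0 < C4)
    (hmom4 : ∫ ω in S, ‖mApp D (mApp F⁻¹ (ξ ω))‖ ^ 4 ∂P ≤ C4 ^ 2 * aD ^ 2)
    (RQ RQ2 : ℝ)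
    (hRQ : RQ = ∫ ω in S, ‖mApp Q (mApp F⁻¹ (ξ ω))‖ ^ 2 ∂P)
    (hRQ2 : RQ2 = ∫ ω in S, ‖mApp Q (mApp F⁻¹ (ξ ω) + mApp F⁻¹ (gT (mApp F⁻¹ (ξ ω))))‖ ^ 2 ∂P)
    (αQ1 : ℝ) (hα1 : αQ1 < 1)
    (hαbound : mopNorm (Q * F⁻¹ * D) * (τ3 / 2) * C4 * aD ≤ αQ1 * Real.sqrt RQ) :
    RQ * (1 - αQ1) ^ 2 ≤ RQ2 ∧ RQ2 ≤ RQ * (1 + αQ1) ^ 2 := by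
  classical
  -- matrix algebra facts
  have hDdet : IsUnit D.det := isUnit_iff_ne_zero.2 hD.det_pos.ne'
  have hDDinv : D * D⁻¹ = 1 := Matrix.mul_nonsing_inv D hDdet
  have hDinvD : D⁻¹ * D = 1 := Matrix.nonsing_inv_mul D hDdet
  have hQFD : Q * F⁻¹ * D * D⁻¹ = Q * F⁻¹ := by rw [Matrix.mul_assoc, hDDinv, Matrix.mul_one]
  set N3 := mopNorm (Q * F⁻¹ * D) with hN3
  have hN30 : 0 ≤ N3 := mopNorm_nonneg _
  set c := N3 * (τ3 / 2) with hcdef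
  have hc0 : 0 ≤ c := mul_nonneg hN30 (by linarith only [hτ3])
  -- symmetry of D⁻¹
  have hsym : ∀ x y : EuclideanSpace ℝ (Fin p), ⟪mApp D⁻¹ x, y⟫ = ⟪x, mApp D⁻¹ y⟫ := by
    intro x y
    exact (Matrix.isHermitian_iff_isSymmetric.1 hD.1.inv) x y
  -- bound on gT
  have hgTb : ∀ z : EuclideanSpace ℝ (Fin p),
      ‖mApp D⁻¹ (gT z)‖ ≤ τ3 / 2 * ‖mApp D z‖ ^ 2 := by
    intro z
    set v := mApp D⁻¹ (gT z) with hv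
    have hDDv : mApp D (mApp D⁻¹ v) = v := by rw [← mApp_mul, hDDinv, mApp_one]
    have hb3 := hT3 υs (by simp [sub_self, mApp_zero, hrb.le]) z (mApp D⁻¹ v)
    rw [hDDv] at hb3
    have hnv : ‖v‖ ^ 2 = 1 / 2 * iteratedFDeriv ℝ 3 f υs ![z, z, mApp D⁻¹ v] := by
      rw [← real_inner_self_eq_norm_sq, hv, hsym, hgT]
    have hle : ‖v‖ ^ 2 ≤ τ3 / 2 * ‖mApp D z‖ ^ 2 * ‖v‖ := by
      have habs := le_abs_self (iteratedFDeriv ℝ 3 f υs ![z, z, mApp D⁻¹ v])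
      rw [hnv]; linarith only [hb3, habs]
    rcases (norm_nonneg v).eq_or_lt with h0 | h0
    · rw [← h0]; positivity
    · rw [pow_two] at hle
      exact le_of_mul_le_mul_right hle h0
  -- functions
  set u : Ω → EuclideanSpace ℝ (Fin p) := fun ω => mApp F⁻¹ (ξ ω) with hu
  set A : Ω → ℝ := fun ω => ‖mApp Q (u ω)‖ with hA
  set B : Ω → ℝ := fun ω => ‖mApp Q (mApp F⁻¹ (gT (u ω)))‖ with hB
  set n : Ω → ℝ := fun ω => ‖mApp Q (u ω + mApp F⁻¹ (gT (u ω)))‖ with hn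
  set h : Ω → ℝ := fun ω => ‖mApp D (u ω)‖ with hh
  have hA0 : ∀ ω, 0 ≤ A ω := fun ω => norm_nonneg _
  have hB0 : ∀ ω, 0 ≤ B ω := fun ω => norm_nonneg _
  have hh0 : ∀ ω, 0 ≤ h ω := fun ω => norm_nonneg _
  have hn0 : ∀ ω, 0 ≤ n ω := fun ω => norm_nonneg _
  -- rewrite hypotheses in terms of these functions
  have hRQ' : RQ = ∫ ω in S, A ω ^ 2 ∂P := by rw [hRQ]
  have hRQ2' : RQ2 = ∫ ω in S, n ω ^ 2 ∂P := by rw [hRQ2]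
  have hmom4' : ∫ ω in S, h ω ^ 4 ∂P ≤ C4 ^ 2 * aD ^ 2 := by
    simpa only [hh, hu] using hmom4
  have hhS : ∀ ω ∈ S, h ω ≤ rD := by
    intro ω hω; simpa only [hh, hu] using hξD ω hω
  -- pointwise bound on B
  have hBle : ∀ ω, B ω ≤ c * h ω ^ 2 := by
    intro ω
    have hsplit : mApp Q (mApp F⁻¹ (gT (u ω))) = mApp (Q * F⁻¹ * D) (mApp D⁻¹ (gT (u ω))) := by
      rw [← mApp_mul, ← mApp_mul, hQFD]
    calc B ω = ‖mApp (Q * F⁻¹ * D) (mApp D⁻¹ (gT (u ω)))‖ := by rw [hB]; simp only; rw [hsplit]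
      _ ≤ N3 * ‖mApp D⁻¹ (gT (u ω))‖ := mApp_norm_le _ _
      _ ≤ N3 * (τ3 / 2 * ‖mApp D (u ω)‖ ^ 2) := by
          exact mul_le_mul_of_nonneg_left (hgTb _) hN30
      _ = c * h ω ^ 2 := by rw [hcdef, hh]; ring
  -- pointwise norm inequalities
  have hnAB : ∀ ω, n ω ≤ A ω + B ω := by
    intro ω
    rw [hn, hA, hB]
    simp only
    rw [mApp_add]
    exact norm_add_le _ _
  have hnAB2 : ∀ ω, (A ω - B ω) ^ 2 ≤ n ω ^ 2 := by
    intro ω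
    have h1' : A ω ≤ n ω + B ω := by
      rw [hn, hA, hB]; simp only; rw [mApp_add]
      exact norm_le_add_norm_add _ _
    have h2' : B ω ≤ n ω + A ω := by
      rw [hn, hA, hB]; simp only; rw [mApp_add]
      calc ‖mApp Q (mApp F⁻¹ (gT (u ω)))‖
          ≤ ‖mApp Q (mApp F⁻¹ (gT (u ω))) + mApp Q (u ω)‖ + ‖mApp Q (u ω)‖ :=
            norm_le_add_norm_add _ _
        _ = ‖mApp Q (u ω) + mApp Q (mApp F⁻¹ (gT (u ω)))‖ + ‖mApp Q (u ω)‖ := by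
            rw [add_comm (mApp Q (mApp F⁻¹ (gT (u ω))))]
    exact aux_sq_le_sq (A ω - B ω) (n ω) (by linarith only [h1']) (by linarith only [h2'])
  -- continuity of gT
  have hgTcoord : ∀ (z : EuclideanSpace ℝ (Fin p)) (i : Fin p),
      gT z i = 1 / 2 * iteratedFDeriv ℝ 3 f υs ![z, z, EuclideanSpace.single i 1] := by
    intro z i
    have h0 := hgT z (EuclideanSpace.single i (1:ℝ))
    rw [EuclideanSpace.inner_single_right] at h0
    simpa using h0
  have htuple : ∀ w : EuclideanSpace ℝ (Fin p),
      Continuous fun z : EuclideanSpace ℝ (Fin p) => (![z, z, w] : Fin 3 → EuclideanSpace ℝ (Fin p)) := by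
    intro w
    refine continuous_pi fun j => ?_
    fin_cases j
    · exact continuous_id
    · exact continuous_id
    · simpa using continuous_const
  have hgTc : Continuous gT := by
    have hrep : gT = fun z => (EuclideanSpace.equiv (Fin p) ℝ).symm
        (fun i => 1 / 2 * iteratedFDeriv ℝ 3 f υs ![z, z, EuclideanSpace.single i 1]) := by
      funext z
      refine (EuclideanSpace.equiv (Fin p) ℝ).injective ?_
      funext i
      simpa using hgTcoord z i
    rw [hrep]
    refine (ContinuousLinearEquiv.continuous _).comp (continuous_pi fun i => ?_)
    exact continuous_const.mul
      ((iteratedFDeriv ℝ 3 f υs).coe_continuous.comp (htuple _))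
  -- measurability
  have mu : Measurable u := (mApp_continuous F⁻¹).measurable.comp hξm
  have mA : Measurable A := ((mApp_continuous Q).measurable.comp mu).norm
  have mh : Measurable h := ((mApp_continuous D).measurable.comp mu).norm
  have mg : Measurable fun ω => mApp F⁻¹ (gT (u ω)) :=
    (mApp_continuous F⁻¹).measurable.comp (hgTc.measurable.comp mu)
  have mB : Measurable B := ((mApp_continuous Q).measurable.comp mg).norm
  have mn : Measurable n := ((mApp_continuous Q).measurable.comp (mu.add mg)).norm
  -- integrability helper
  have hInt : ∀ (g : Ω → ℝ) (M : ℝ), Measurable g → (∀ ω ∈ S, |g ω| ≤ M) →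
      Integrable g (P.restrict S) := by
    intro g M hg hb
    refine Integrable.mono' (integrable_const M) hg.aestronglyMeasurable ?_
    rw [ae_restrict_iff' hS]
    exact ae_of_all _ fun ω hω => by simpa [Real.norm_eq_abs] using hb ω hω
  -- bounds on S
  set MA := mopNorm (Q * D⁻¹) * rD with hMA
  have hMA0 : 0 ≤ MA := mul_nonneg (mopNorm_nonneg _) hrD.le
  have hAS : ∀ ω ∈ S, A ω ≤ MA := by
    intro ω hω
    have hx : u ω = mApp D⁻¹ (mApp D (u ω)) := by rw [← mApp_mul, hDinvD, mApp_one]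
    have hAeq : A ω = ‖mApp (Q * D⁻¹) (mApp D (u ω))‖ := by
      rw [hA]; simp only; rw [mApp_mul, ← hx]
    rw [hAeq, hMA]
    calc ‖mApp (Q * D⁻¹) (mApp D (u ω))‖ ≤ mopNorm (Q * D⁻¹) * h ω := mApp_norm_le _ _
      _ ≤ mopNorm (Q * D⁻¹) * rD :=
          mul_le_mul_of_nonneg_left (hhS ω hω) (mopNorm_nonneg _)
  have hBS : ∀ ω ∈ S, B ω ≤ c * rD ^ 2 := by
    intro ω hω
    refine le_trans (hBle ω) ?_
    exact mul_le_mul_of_nonneg_left (pow_le_pow_left₀ (hh0 ω) (hhS ω hω) 2) hc0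
  -- integrability
  have intA2 : Integrable (fun ω => A ω ^ 2) (P.restrict S) := by
    refine hInt _ (MA ^ 2) (mA.pow_const 2) fun ω hω => ?_
    rw [abs_of_nonneg (sq_nonneg _)]
    exact pow_le_pow_left₀ (hA0 ω) (hAS ω hω) 2
  have intB2 : Integrable (fun ω => B ω ^ 2) (P.restrict S) := by
    refine hInt _ ((c * rD ^ 2) ^ 2) (mB.pow_const 2) fun ω hω => ?_
    rw [abs_of_nonneg (sq_nonneg _)]
    exact pow_le_pow_left₀ (hB0 ω) (hBS ω hω) 2
  have intAB : Integrable (fun ω => A ω * B ω) (P.restrict S) := by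
    refine hInt _ (MA * (c * rD ^ 2)) (mA.mul mB) fun ω hω => ?_
    rw [abs_of_nonneg (mul_nonneg (hA0 ω) (hB0 ω))]
    exact mul_le_mul (hAS ω hω) (hBS ω hω) (hB0 ω) hMA0
  have intn2 : Integrable (fun ω => n ω ^ 2) (P.restrict S) := by
    refine hInt _ ((MA + c * rD ^ 2) ^ 2) (mn.pow_const 2) fun ω hω => ?_
    rw [abs_of_nonneg (sq_nonneg _)]
    refine pow_le_pow_left₀ (hn0 ω) ?_ 2
    exact le_trans (hnAB ω) (add_le_add (hAS ω hω) (hBS ω hω))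
  have intApB2 : Integrable (fun ω => (A ω + B ω) ^ 2) (P.restrict S) := by
    refine hInt _ ((MA + c * rD ^ 2) ^ 2) ((mA.add mB).pow_const 2) fun ω hω => ?_
    rw [abs_of_nonneg (sq_nonneg _)]
    exact pow_le_pow_left₀ (add_nonneg (hA0 ω) (hB0 ω))
      (add_le_add (hAS ω hω) (hBS ω hω)) 2
  have intAmB2 : Integrable (fun ω => (A ω - B ω) ^ 2) (P.restrict S) := by
    refine hInt _ ((MA + c * rD ^ 2) ^ 2) ((mA.sub mB).pow_const 2) fun ω hω => ?_
    rw [abs_of_nonneg (sq_nonneg _)]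
    have habs : |A ω - B ω| ≤ MA + c * rD ^ 2 := by
      rw [abs_sub_le_iff]
      have hcr : 0 ≤ c * rD ^ 2 := by positivity
      constructor
      · linarith only [hAS ω hω, hB0 ω, hcr]
      · linarith only [hBS ω hω, hA0 ω, hMA0]
    calc (A ω - B ω) ^ 2 = |A ω - B ω| ^ 2 := (sq_abs _).symm
      _ ≤ (MA + c * rD ^ 2) ^ 2 := pow_le_pow_left₀ (abs_nonneg _) habs 2
  have inth4 : Integrable (fun ω => h ω ^ 4) (P.restrict S) := by
    refine hInt _ (rD ^ 4) (mh.pow_const 4) fun ω hω => ?_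
    rw [abs_of_nonneg (by positivity)]
    exact pow_le_pow_left₀ (hh0 ω) (hhS ω hω) 4
  -- nonnegativity
  have haD0 : 0 ≤ aD := by rw [haD]; exact integral_nonneg fun ω => sq_nonneg _
  have hRQ0 : 0 ≤ RQ := by rw [hRQ']; exact integral_nonneg fun ω => sq_nonneg _
  set sR := Real.sqrt RQ with hsR
  have hsR0 : 0 ≤ sR := Real.sqrt_nonneg _
  have hsR2 : sR ^ 2 = RQ := Real.sq_sqrt hRQ0
  set IB := ∫ ω in S, B ω ^ 2 ∂P with hIBdef
  have hIB0 : 0 ≤ IB := integral_nonneg fun ω => sq_nonneg _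
  set b := Real.sqrt IB with hbdef
  have hb0 : 0 ≤ b := Real.sqrt_nonneg _
  have hb2 : b ^ 2 = IB := Real.sq_sqrt hIB0
  -- bound on IB
  have hIBle : IB ≤ (c * (C4 * aD)) ^ 2 := by
    have hmono : IB ≤ ∫ ω in S, c ^ 2 * h ω ^ 4 ∂P := by
      rw [hIBdef]
      refine integral_mono intB2 (inth4.const_mul _) fun ω => ?_
      have h2' : B ω ^ 2 ≤ (c * h ω ^ 2) ^ 2 := pow_le_pow_left₀ (hB0 ω) (hBle ω) 2
      calc B ω ^ 2 ≤ (c * h ω ^ 2) ^ 2 := h2'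
        _ = c ^ 2 * h ω ^ 4 := by ring
    have hc2 : ∫ ω in S, c ^ 2 * h ω ^ 4 ∂P = c ^ 2 * ∫ ω in S, h ω ^ 4 ∂P :=
      integral_const_mul _ _
    calc IB ≤ c ^ 2 * ∫ ω in S, h ω ^ 4 ∂P := by rw [← hc2]; exact hmono
      _ ≤ c ^ 2 * (C4 ^ 2 * aD ^ 2) := mul_le_mul_of_nonneg_left hmom4' (by positivity)
      _ = (c * (C4 * aD)) ^ 2 := by ring
  have hkey : c * (C4 * aD) ≤ αQ1 * sR := by
    have heq : c * (C4 * aD) = N3 * (τ3 / 2) * C4 * aD := by rw [hcdef]; ring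
    rw [heq, hsR]
    exact hαbound
  have hkey0 : 0 ≤ c * (C4 * aD) := by positivity
  have hαsR0 : 0 ≤ αQ1 * sR := le_trans hkey0 hkey
  have hble : b ≤ αQ1 * sR := by
    have h1' : IB ≤ (αQ1 * sR) ^ 2 := le_trans hIBle (pow_le_pow_left₀ hkey0 hkey 2)
    calc b = Real.sqrt IB := hbdef
      _ ≤ Real.sqrt ((αQ1 * sR) ^ 2) := Real.sqrt_le_sqrt h1'
      _ = αQ1 * sR := Real.sqrt_sq hαsR0
  -- Cauchy-Schwarz
  have hCS : ∫ ω in S, A ω * B ω ∂P ≤ sR * b := by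
    have hcs := integral_mul_le_sqrt_mul_sqrt (P.restrict S) A B hA0 hB0 intAB intA2 intB2
    rw [← hRQ', ← hIBdef] at hcs
    exact hcs
  set IAB := ∫ ω in S, A ω * B ω ∂P with hIABdef
  -- expansions
  have hplus : ∫ ω in S, (A ω + B ω) ^ 2 ∂P = RQ + 2 * IAB + IB := by
    have hrw : (fun ω => (A ω + B ω) ^ 2) = fun ω => A ω ^ 2 + (2 * (A ω * B ω) + B ω ^ 2) := by
      funext ω; ring
    have hgint : Integrable (fun ω => 2 * (A ω * B ω) + B ω ^ 2) (P.restrict S) :=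
      (intAB.const_mul 2).add intB2
    calc ∫ ω in S, (A ω + B ω) ^ 2 ∂P
        = ∫ ω in S, (A ω ^ 2 + (2 * (A ω * B ω) + B ω ^ 2)) ∂P := by rw [hrw]
      _ = (∫ ω in S, A ω ^ 2 ∂P) + ∫ ω in S, (2 * (A ω * B ω) + B ω ^ 2) ∂P := by
          rw [integral_add intA2 hgint]
      _ = (∫ ω in S, A ω ^ 2 ∂P) + ((∫ ω in S, 2 * (A ω * B ω) ∂P) + ∫ ω in S, B ω ^ 2 ∂P) := by
          rw [integral_add (intAB.const_mul 2) intB2]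
      _ = RQ + 2 * IAB + IB := by
          rw [integral_const_mul, ← hRQ', ← hIABdef, ← hIBdef]; ring
  have hminus : ∫ ω in S, (A ω - B ω) ^ 2 ∂P = RQ - 2 * IAB + IB := by
    have hrw : (fun ω => (A ω - B ω) ^ 2) = fun ω => A ω ^ 2 + (B ω ^ 2 - 2 * (A ω * B ω)) := by
      funext ω; ring
    have hgint : Integrable (fun ω => B ω ^ 2 - 2 * (A ω * B ω)) (P.restrict S) :=
      intB2.sub (intAB.const_mul 2)
    calc ∫ ω in S, (A ω - B ω) ^ 2 ∂P
        = ∫ ω in S, (A ω ^ 2 + (B ω ^ 2 - 2 * (A ω * B ω))) ∂P := by rw [hrw]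
      _ = (∫ ω in S, A ω ^ 2 ∂P) + ∫ ω in S, (B ω ^ 2 - 2 * (A ω * B ω)) ∂P := by
          rw [integral_add intA2 hgint]
      _ = (∫ ω in S, A ω ^ 2 ∂P) + ((∫ ω in S, B ω ^ 2 ∂P) - ∫ ω in S, 2 * (A ω * B ω) ∂P) := by
          rw [integral_sub intB2 (intAB.const_mul 2)]
      _ = RQ - 2 * IAB + IB := by
          rw [integral_const_mul, ← hRQ', ← hIABdef, ← hIBdef]; ring
  -- comparisons
  have hupper : RQ2 ≤ RQ + 2 * IAB + IB := by
    calc RQ2 = ∫ ω in S, n ω ^ 2 ∂P := hRQ2'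
      _ ≤ ∫ ω in S, (A ω + B ω) ^ 2 ∂P :=
          integral_mono intn2 intApB2 fun ω => pow_le_pow_left₀ (hn0 ω) (hnAB ω) 2
      _ = RQ + 2 * IAB + IB := hplus
  have hlower : RQ - 2 * IAB + IB ≤ RQ2 := by
    calc RQ - 2 * IAB + IB = ∫ ω in S, (A ω - B ω) ^ 2 ∂P := hminus.symm
      _ ≤ ∫ ω in S, n ω ^ 2 ∂P := integral_mono intAmB2 intn2 fun ω => hnAB2 ω
      _ = RQ2 := hRQ2'.symm
  constructor
  · have hs1 : (1 - αQ1) * sR ≤ sR - b := by linarith only [hble]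
    have hs0 : 0 ≤ (1 - αQ1) * sR := mul_nonneg (by linarith only [hα1]) hsR0
    have hsq : ((1 - αQ1) * sR) ^ 2 ≤ (sR - b) ^ 2 := pow_le_pow_left₀ hs0 hs1 2
    have hfin : RQ * (1 - αQ1) ^ 2 = ((1 - αQ1) * sR) ^ 2 := by rw [← hsR2]; ring
    have hmid : (sR - b) ^ 2 ≤ RQ2 := by linarith only [hlower, hCS, hb2, hsR2, sq_expand_sub sR b]
    linarith only [hsq, hfin, hmid]
  · have hs1 : sR + b ≤ (1 + αQ1) * sR := by linarith only [hble]
    have h0' : 0 ≤ sR + b := add_nonneg hsR0 hb0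
    have hsq : (sR + b) ^ 2 ≤ ((1 + αQ1) * sR) ^ 2 := pow_le_pow_left₀ h0' hs1 2
    have hfin : ((1 + αQ1) * sR) ^ 2 = RQ * (1 + αQ1) ^ 2 := by rw [← hsR2]; ring
    have hmid : RQ2 ≤ (sR + b) ^ 2 := by linarith only [hupper, hCS, hb2, hsR2, sq_expand_add sR b]
    linarith only [hsq, hfin, hmid]
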